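/- Let f : {−1,1}ⁿ → ℝ be a nonconstant function whose multilinear (Fourier) expansion has degree at most a. Then, under the uniform distribution on {−1,1}ⁿ, Pr[ f(x) > E[f] ] ≥ 1/(4 e^{2a}). -/

import Mathlib

open Finset Real Set

namespace BCA

variable {ι : Type*} [DecidableEq ι]

def chi (S T : Finset ι) : ℝ := ∏ i ∈ S, if i ∈ T then (-1 : ℝ) else 1

lemma chi_empty (T : Finset ι) : chi ∅ T = 1 := by simp [chi]

lemma chi_sq (S T : Finset ι) : chi S T * chi S T = 1 := by
  rw [chi, ← Finset.prod_mul_distrib]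
  apply Finset.prod_eq_one
  intro i _
  split_ifs <;> norm_num

lemma chi_insert_left {i : ι} {S : Finset ι} (h : i ∉ S) (T : Finset ι) :
    chi (insert i S) T = (if i ∈ T then (-1:ℝ) else 1) * chi S T :=
  Finset.prod_insert h

lemma chi_insert_right {i : ι} {D : Finset ι} (h : i ∉ D) (T : Finset ι) :
    chi D (insert i T) = chi D T := by
  apply Finset.prod_congr rfl
  intro j hj
  have hji : j ≠ i := fun e => h (e ▸ hj)
  simp [Finset.mem_insert, hji]

lemma chi_mul (S S' T : Finset ι) :
    chi S T * chi S' T = chi ((S \ S') ∪ (S' \ S)) T := by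
  have h1 : chi S T = chi (S \ S') T * chi (S ∩ S') T := by
    rw [chi, chi, chi, ← Finset.prod_union (Finset.disjoint_sdiff_inter S S')]
    rw [Finset.sdiff_union_inter]
  have h2 : chi S' T = chi (S' \ S) T * chi (S ∩ S') T := by
    rw [chi, chi, chi, ← Finset.prod_union]
    · rw [Finset.inter_comm, Finset.sdiff_union_inter]
    · exact (Finset.disjoint_sdiff_inter S' S).mono_right (by rw [Finset.inter_comm])
  rw [h1, h2, mul_mul_mul_comm, chi_sq, mul_one, chi, chi, chi,
    ← Finset.prod_union disjoint_sdiff_sdiff]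

lemma insert_injOn (i : ι) (u : Finset ι) (hiu : i ∉ u) :
    ∀ x ∈ u.powerset, ∀ y ∈ u.powerset, insert i x = insert i y → x = y := by
  intro x hx y hy h
  have hix : i ∉ x := fun hh => hiu (Finset.mem_powerset.1 hx hh)
  have hiy : i ∉ y := fun hh => hiu (Finset.mem_powerset.1 hy hh)
  rw [← Finset.erase_insert hix, h, Finset.erase_insert hiy]

lemma powerset_disj (i : ι) (u : Finset ι) (hiu : i ∉ u) :
    Disjoint u.powerset (u.powerset.image (insert i)) := by
  rw [Finset.disjoint_left]
  intro T hT hT'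
  obtain ⟨T', _, rfl⟩ := Finset.mem_image.1 hT'
  exact hiu (Finset.mem_powerset.1 hT (Finset.mem_insert_self i T'))

lemma sum_chi (u : Finset ι) : ∀ D : Finset ι, D ⊆ u →
    ∑ T ∈ u.powerset, chi D T = if D = ∅ then (2:ℝ)^u.card else 0 := by
  induction u using Finset.induction_on with
  | empty =>
    intro D hD
    simp [Finset.subset_empty.1 hD, chi_empty]
  | @insert i u hiu ih =>
    intro D hD
    rw [Finset.powerset_insert, Finset.sum_union (powerset_disj i u hiu),
      Finset.sum_image (insert_injOn i u hiu)]
    by_cases hiD : i ∈ D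
    · have hD' : D.erase i ⊆ u := by
        intro j hj
        have := hD (Finset.mem_of_mem_erase hj)
        rcases Finset.mem_insert.1 this with h | h
        · exact absurd h (Finset.ne_of_mem_erase hj)
        · exact h
      have hDi : D = insert i (D.erase i) := (Finset.insert_erase hiD).symm
      have hie : i ∉ D.erase i := Finset.notMem_erase i D
      have e1 : ∀ T ∈ u.powerset, chi D T = chi (D.erase i) T := by
        intro T hT
        have hiT : i ∉ T := fun hh => hiu (Finset.mem_powerset.1 hT hh)
        conv_lhs => rw [hDi]
        rw [chi_insert_left hie, if_neg hiT, one_mul]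
      have e2 : ∀ T ∈ u.powerset, chi D (insert i T) = -chi (D.erase i) T := by
        intro T hT
        conv_lhs => rw [hDi]
        rw [chi_insert_left hie, if_pos (Finset.mem_insert_self i T),
          chi_insert_right hie, neg_one_mul]
      rw [Finset.sum_congr rfl e1, Finset.sum_congr rfl e2]
      have : D ≠ ∅ := Finset.ne_empty_of_mem hiD
      rw [if_neg this, Finset.sum_neg_distrib]
      ring
    · have hDu : D ⊆ u := by
        intro j hj
        rcases Finset.mem_insert.1 (hD hj) with h | h
        · exact absurd (h ▸ hj) hiD
        · exact h
      have e2 : ∀ T ∈ u.powerset, chi D (insert i T) = chi D T := by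
        intro T _
        exact chi_insert_right hiD T
      rw [Finset.sum_congr rfl e2, ih D hDu, Finset.card_insert_of_notMem hiu]
      split_ifs <;> ring

lemma sum_chi_mul_chi {u S S' : Finset ι} (hS : S ⊆ u) (hS' : S' ⊆ u) :
    ∑ T ∈ u.powerset, chi S T * chi S' T = if S = S' then (2:ℝ)^u.card else 0 := by
  have hD : (S \ S') ∪ (S' \ S) ⊆ u :=
    Finset.union_subset ((Finset.sdiff_subset).trans hS) ((Finset.sdiff_subset).trans hS')
  have : ∀ T ∈ u.powerset, chi S T * chi S' T = chi ((S \ S') ∪ (S' \ S)) T :=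
    fun T _ => chi_mul S S' T
  rw [Finset.sum_congr rfl this, sum_chi u _ hD]
  congr 1
  rw [Finset.union_eq_empty]
  rw [eq_iff_iff]
  constructor
  · rintro ⟨h1, h2⟩
    exact Finset.Subset.antisymm (Finset.sdiff_eq_empty_iff_subset.1 h1)
      (Finset.sdiff_eq_empty_iff_subset.1 h2)
  · rintro rfl
    simp

lemma parseval (u : Finset ι) (d : Finset ι → ℝ) :
    ∑ T ∈ u.powerset, (∑ S ∈ u.powerset, d S * chi S T)^2
      = 2^u.card * ∑ S ∈ u.powerset, (d S)^2 := by
  have expand : ∀ T, (∑ S ∈ u.powerset, d S * chi S T)^2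
      = ∑ S ∈ u.powerset, ∑ S' ∈ u.powerset, (d S * d S') * (chi S T * chi S' T) := by
    intro T
    rw [sq, Finset.sum_mul_sum]
    exact Finset.sum_congr rfl fun S _ => Finset.sum_congr rfl fun S' _ => by ring
  rw [Finset.sum_congr rfl fun T _ => expand T]
  rw [Finset.sum_comm]
  have inner : ∀ S ∈ u.powerset, ∑ T ∈ u.powerset, ∑ S' ∈ u.powerset,
      (d S * d S') * (chi S T * chi S' T) = 2^u.card * (d S)^2 := by
    intro S hS
    rw [Finset.sum_comm]
    have : ∀ S' ∈ u.powerset, ∑ T ∈ u.powerset, (d S * d S') * (chi S T * chi S' T)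
        = (d S * d S') * (if S = S' then (2:ℝ)^u.card else 0) := by
      intro S' hS'
      rw [← Finset.mul_sum, sum_chi_mul_chi (Finset.mem_powerset.1 hS) (Finset.mem_powerset.1 hS')]
    rw [Finset.sum_congr rfl this]
    have : ∀ S' ∈ u.powerset, (d S * d S' * if S = S' then (2:ℝ)^u.card else 0)
        = if S' = S then d S * d S' * (2:ℝ)^u.card else 0 := by
      intro S' _
      by_cases h : S' = S
      · subst h; simp
      · rw [if_neg h, if_neg (fun hh => h hh.symm), mul_zero]
    rw [Finset.sum_congr rfl this, Finset.sum_ite_eq' u.powerset S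
      (fun S' => d S * d S' * (2:ℝ)^u.card), if_pos hS]
    ring
  rw [Finset.sum_congr rfl inner, ← Finset.mul_sum]


section TwoPoint

variable {q : ℝ} (hq2 : 2 < q) (hq3 : q ≤ 5/2)

include hq2 hq3 in
lemma phi_nonneg : ∀ t ∈ Icc (0:ℝ) 1,
    (1+t) ^ (q-1) - (1-t) ^ (q-1) ≤ 2*(q-1)*t := by
  set φ : ℝ → ℝ := fun t => 2*(q-1)*t - (1+t) ^ (q-1) + (1-t) ^ (q-1) with hφ
  have hq1 : (1:ℝ) ≤ q - 1 := by linarith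
  have hcont : ContinuousOn φ (Icc 0 1) := by
    apply ContinuousOn.add
    apply ContinuousOn.sub
    · exact (continuous_const.mul continuous_id).continuousOn
    · exact ((continuous_const.add continuous_id).rpow_const
        (fun t => Or.inr (by linarith))).continuousOn
    · exact ((continuous_const.sub continuous_id).rpow_const
        (fun t => Or.inr (by linarith))).continuousOn
  have hderiv : ∀ t ∈ Ioo (0:ℝ) 1, HasDerivAt φ
      (2*(q-1) - ((q-1) * (1+t)^(q-1-1) * 1) + ((q-1) * (1-t)^(q-1-1) * (-1))) t := by
    intro t ht
    have h1 : HasDerivAt (fun t : ℝ => 1+t) 1 t := by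
      simpa using (hasDerivAt_id t).const_add (1:ℝ)
    have h2 : HasDerivAt (fun t : ℝ => 1-t) (-1) t := by
      simpa using (hasDerivAt_id t).const_sub (1:ℝ)
    have d1 : HasDerivAt (fun t : ℝ => (1+t)^(q-1)) ((q-1) * (1+t)^(q-1-1) * 1) t :=
      (Real.hasDerivAt_rpow_const (x := 1+t) (p := q-1)
        (Or.inl (by nlinarith [ht.1]))).comp t h1
    have d2 : HasDerivAt (fun t : ℝ => (1-t)^(q-1)) ((q-1) * (1-t)^(q-1-1) * (-1)) t :=
      (Real.hasDerivAt_rpow_const (x := 1-t) (p := q-1)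
        (Or.inl (by nlinarith [ht.2]))).comp t h2
    have d0 : HasDerivAt (fun t : ℝ => 2*(q-1)*t) (2*(q-1)) t := by
      simpa using (hasDerivAt_id t).const_mul (2*(q-1))
    exact (d0.sub d1).add d2
  have hmono : MonotoneOn φ (Icc 0 1) := by
    apply monotoneOn_of_deriv_nonneg (convex_Icc 0 1) hcont
    · intro t ht
      rw [interior_Icc] at ht
      exact (hderiv t ht).differentiableAt.differentiableWithinAt
    · intro t ht
      rw [interior_Icc] at ht
      rw [(hderiv t ht).deriv]
      have hs0 : (0:ℝ) ≤ q - 2 := by linarith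
      have hs1 : q - 2 ≤ 1 := by linarith
      have hcc := Real.concaveOn_rpow hs0 hs1
      have key : (1+t)^(q-1-1) + (1-t)^(q-1-1) ≤ 2 := by
        have key2 := hcc.2 (mem_Ici.2 (by linarith [ht.1] : (0:ℝ) ≤ 1+t))
          (mem_Ici.2 (by linarith [ht.2] : (0:ℝ) ≤ 1-t))
          (by norm_num : (0:ℝ) ≤ 1/2) (by norm_num : (0:ℝ) ≤ 1/2) (by norm_num)
        simp only [smul_eq_mul] at key2
        rw [show (1/2:ℝ)*(1+t) + (1/2)*(1-t) = 1 by ring, Real.one_rpow] at key2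
        have hexp : q - 2 = q - 1 - 1 := by ring
        rw [hexp] at key2
        linarith
      nlinarith
  intro t ht
  have h0 : φ 0 = 0 := by
    simp [hφ, Real.one_rpow]
  have := hmono (left_mem_Icc.2 zero_le_one) ht ht.1
  rw [h0] at this
  simp only [hφ] at this
  linarith

include hq2 hq3 in
lemma core_ineq : ∀ t ∈ Icc (0:ℝ) 1,
    (1+t) ^ q + (1-t) ^ q ≤ 2 + q*(q-1)*t^2 := by
  set ψ : ℝ → ℝ := fun t => 2 + q*(q-1)*t^2 - (1+t) ^ q - (1-t) ^ q with hψ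
  have hq1 : (1:ℝ) ≤ q := by linarith
  have hcont : ContinuousOn ψ (Icc 0 1) := by
    apply ContinuousOn.sub
    apply ContinuousOn.sub
    · exact (continuous_const.add ((continuous_const.mul (continuous_pow 2)))).continuousOn
    · exact ((continuous_const.add continuous_id).rpow_const
        (fun t => Or.inr (by linarith))).continuousOn
    · exact ((continuous_const.sub continuous_id).rpow_const
        (fun t => Or.inr (by linarith))).continuousOn
  have hderiv : ∀ t ∈ Ioo (0:ℝ) 1, HasDerivAt ψ
      (q*(q-1)*(2*t) - (q * (1+t)^(q-1) * 1) - (q * (1-t)^(q-1) * (-1))) t := by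
    intro t ht
    have h1 : HasDerivAt (fun t : ℝ => 1+t) 1 t := by
      simpa using (hasDerivAt_id t).const_add (1:ℝ)
    have h2 : HasDerivAt (fun t : ℝ => 1-t) (-1) t := by
      simpa using (hasDerivAt_id t).const_sub (1:ℝ)
    have d1 : HasDerivAt (fun t : ℝ => (1+t)^q) (q * (1+t)^(q-1) * 1) t :=
      (Real.hasDerivAt_rpow_const (x := 1+t) (p := q) (Or.inr hq1)).comp t h1
    have d2 : HasDerivAt (fun t : ℝ => (1-t)^q) (q * (1-t)^(q-1) * (-1)) t :=
      (Real.hasDerivAt_rpow_const (x := 1-t) (p := q) (Or.inr hq1)).comp t h2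
    have d0 : HasDerivAt (fun t : ℝ => 2 + q*(q-1)*t^2) (q*(q-1)*(2*t)) t := by
      have : HasDerivAt (fun t : ℝ => t^2) (2*t) t := by simpa using hasDerivAt_pow 2 t
      simpa using (this.const_mul (q*(q-1))).const_add 2
    exact (d0.sub d1).sub d2
  have hmono : MonotoneOn ψ (Icc 0 1) := by
    apply monotoneOn_of_deriv_nonneg (convex_Icc 0 1) hcont
    · intro t ht
      rw [interior_Icc] at ht
      exact (hderiv t ht).differentiableAt.differentiableWithinAt
    · intro t ht
      rw [interior_Icc] at ht
      rw [(hderiv t ht).deriv]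
      have := phi_nonneg hq2 hq3 t (Ioo_subset_Icc_self ht)
      have hqpos : (0:ℝ) < q := by linarith
      nlinarith
  intro t ht
  have h0 : ψ 0 = 0 := by
    norm_num [hψ, Real.one_rpow]
  have := hmono (left_mem_Icc.2 zero_le_one) ht ht.1
  rw [h0] at this
  simp only [hψ] at this
  linarith

end TwoPoint

section TwoPoint2

variable {q : ℝ} (hq2 : 2 < q) (hq3 : q ≤ 5/2)

include hq2 hq3 in
lemma two_point_nonneg {A c : ℝ} (hA : 0 ≤ A) (hc : 0 ≤ c) (hcA : c ≤ A) :
    (A+c)^q + (A-c)^q ≤ 2 * (A^2 + (q-1)*c^2) ^ (q/2) := by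
  have hq0 : q ≠ 0 := by linarith
  rcases eq_or_lt_of_le hA with hA0 | hA0
  · have hc0 : c = 0 := le_antisymm (hcA.trans hA0.symm.le) hc
    rw [← hA0, hc0]
    norm_num
    rw [Real.zero_rpow hq0, Real.zero_rpow (by positivity : q/2 ≠ 0)]
    norm_num
  · set t : ℝ := c / A with htdef
    have ht : t ∈ Set.Icc (0:ℝ) 1 := by
      constructor
      · positivity
      · rw [div_le_one hA0]; exact hcA
    have hcore := core_ineq hq2 hq3 t ht
    have hbern : 2 + q*(q-1)*t^2 ≤ 2 * (1 + (q-1)*t^2) ^ (q/2) := by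
      have hb := one_add_mul_self_le_rpow_one_add
        (s := (q-1)*t^2) (by nlinarith [sq_nonneg t] : (-1:ℝ) ≤ (q-1)*t^2)
        (p := q/2) (by linarith)
      nlinarith [hb]
    have hchain : (1+t)^q + (1-t)^q ≤ 2 * (1 + (q-1)*t^2) ^ (q/2) := le_trans hcore hbern
    have hAc : c = A * t := by rw [htdef]; field_simp
    have h1t : (0:ℝ) ≤ 1 + t := by linarith [ht.1]
    have h2t : (0:ℝ) ≤ 1 - t := by linarith [ht.2]
    have e1 : A + c = A * (1+t) := by rw [hAc]; ring
    have e2 : A - c = A * (1-t) := by rw [hAc]; ring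
    have e3 : A^2 + (q-1)*c^2 = A^2 * (1 + (q-1)*t^2) := by rw [hAc]; ring
    rw [e1, e2, e3]
    rw [Real.mul_rpow hA h1t, Real.mul_rpow hA h2t]
    have hAq : (0:ℝ) ≤ A ^ q := Real.rpow_nonneg hA q
    have e4 : (A^2 * (1 + (q-1)*t^2)) ^ (q/2) = A^q * (1 + (q-1)*t^2) ^ (q/2) := by
      rw [Real.mul_rpow (by positivity) (by nlinarith [sq_nonneg t])]
      congr 1
      rw [← Real.rpow_natCast A 2, ← Real.rpow_mul hA]
      congr 1
      push_cast
      ring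
    rw [e4]
    calc A ^ q * (1+t)^q + A ^ q * (1-t)^q = A^q * ((1+t)^q + (1-t)^q) := by ring
    _ ≤ A^q * (2 * (1 + (q-1)*t^2) ^ (q/2)) := by
        apply mul_le_mul_of_nonneg_left hchain hAq
    _ = 2 * (A^q * (1 + (q-1)*t^2) ^ (q/2)) := by ring

include hq2 hq3 in
lemma two_point (A c : ℝ) :
    |A+c|^q + |A-c|^q ≤ 2 * (A^2 + (q-1)*c^2) ^ (q/2) := by
  have hkey : ∀ B d : ℝ, 0 ≤ B → 0 ≤ d → |B+d|^q + |B-d|^q ≤ 2*(B^2+(q-1)*d^2)^(q/2) := by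
    intro B d hB hd
    rcases le_total d B with hdB | hBd
    · rw [abs_of_nonneg (by linarith), abs_of_nonneg (by linarith)]
      exact two_point_nonneg hq2 hq3 hB hd hdB
    · have h := two_point_nonneg hq2 hq3 hd hB hBd
      have e1 : |B + d| = d + B := by rw [abs_of_nonneg (by linarith)]; ring
      have e2 : |B - d| = d - B := by rw [abs_of_nonpos (by linarith)]; ring
      rw [e1, e2]
      refine le_trans (by linarith [h] : (d+B)^q + (d-B)^q ≤ 2*(d^2+(q-1)*B^2)^(q/2)) ?_
      have hd2 : (0:ℝ) ≤ d^2 - B^2 := by nlinarith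
      have hmono : (d^2+(q-1)*B^2) ≤ (B^2+(q-1)*d^2) := by
        nlinarith [mul_nonneg (by linarith : (0:ℝ) ≤ q-2) hd2]
      have := Real.rpow_le_rpow
        (by nlinarith [sq_nonneg d, mul_nonneg (by linarith : (0:ℝ) ≤ q-1) (sq_nonneg B)])
        hmono (by linarith : (0:ℝ) ≤ q/2)
      linarith
  have habs : ∀ B d : ℝ, 0 ≤ B → |B+d|^q + |B-d|^q ≤ 2*(B^2+(q-1)*d^2)^(q/2) := by
    intro B d hB
    rcases le_total 0 d with hd | hd
    · exact hkey B d hB hd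
    · have := hkey B (-d) hB (by linarith)
      rw [show B + -d = B - d by ring, show B - -d = B + d by ring, neg_sq] at this
      linarith
  rcases le_total 0 A with hA | hA
  · exact habs A c hA
  · have := habs (-A) (-c) (by linarith)
    rw [show -A + -c = -(A+c) by ring, show -A - -c = -(A-c) by ring,
      abs_neg, abs_neg, neg_sq, neg_sq] at this
    exact this

include hq2 hq3 in
lemma two_point_rho {ρ : ℝ} (hρ : ρ^2 * (q-1) = 1) (A B : ℝ) :
    |A + ρ*B|^q + |A - ρ*B|^q ≤ 2 * (A^2 + B^2)^(q/2) := by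
  have h := two_point hq2 hq3 A (ρ*B)
  have e : A^2 + (q-1)*(ρ*B)^2 = A^2 + B^2 := by linear_combination B^2 * hρ
  rwa [e] at h

end TwoPoint2

lemma sq_rpow (x : ℝ) (q : ℝ) : (x^2) ^ (q/2) = |x| ^ q := by
  rw [← sq_abs, ← Real.rpow_natCast |x| 2, ← Real.rpow_mul (abs_nonneg x)]
  congr 1
  push_cast
  ring

lemma hypercontractivity {q ρ : ℝ} (hq2 : 2 < q) (hq3 : q ≤ 5/2)
    (hρ : ρ^2 * (q-1) = 1) (u : Finset ι) :
    ∀ b : Finset ι → ℝ,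
    ∑ T ∈ u.powerset, |∑ S ∈ u.powerset, ρ^S.card * b S * chi S T| ^ q
      ≤ 2^u.card * (∑ S ∈ u.powerset, (b S)^2) ^ (q/2) := by
  have hq0 : (0:ℝ) < q := by linarith
  have hp2 : (0:ℝ) < q/2 := by linarith
  have hip : (0:ℝ) < 1/(q/2) := by rw [one_div]; exact inv_pos.2 hp2
  induction u using Finset.induction_on with
  | empty =>
    intro b
    simp only [Finset.powerset_empty, Finset.sum_singleton, Finset.card_empty, pow_zero,
      one_mul, chi_empty, mul_one]
    rw [sq_rpow]
  | @insert i u hiu ih =>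
    intro b
    have hsplit : ∀ g : Finset ι → ℝ, ∑ S ∈ (insert i u).powerset, g S
        = ∑ S ∈ u.powerset, g S + ∑ S ∈ u.powerset, g (insert i S) := by
      intro g
      rw [Finset.powerset_insert, Finset.sum_union (powerset_disj i u hiu),
        Finset.sum_image (insert_injOn i u hiu)]
    set A : Finset ι → ℝ := fun T => ∑ S ∈ u.powerset, ρ^S.card * b S * chi S T with hA
    set B : Finset ι → ℝ :=
      fun T => ∑ S ∈ u.powerset, ρ^S.card * b (insert i S) * chi S T with hB
    have hinner1 : ∀ T ∈ u.powerset,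
        ∑ S ∈ (insert i u).powerset, ρ^S.card * b S * chi S T = A T + ρ * B T := by
      intro T hT
      have hiT : i ∉ T := fun hh => hiu (Finset.mem_powerset.1 hT hh)
      rw [hsplit]
      congr 1
      rw [hB, Finset.mul_sum]
      apply Finset.sum_congr rfl
      intro S hS
      have hiS : i ∉ S := fun hh => hiu (Finset.mem_powerset.1 hS hh)
      rw [Finset.card_insert_of_notMem hiS, chi_insert_left hiS, if_neg hiT, one_mul, pow_succ]
      ring
    have hinner2 : ∀ T ∈ u.powerset,
        ∑ S ∈ (insert i u).powerset, ρ^S.card * b S * chi S (insert i T) = A T - ρ * B T := by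
      intro T hT
      rw [hsplit]
      have e1 : ∑ S ∈ u.powerset, ρ^S.card * b S * chi S (insert i T) = A T := by
        apply Finset.sum_congr rfl
        intro S hS
        have hiS : i ∉ S := fun hh => hiu (Finset.mem_powerset.1 hS hh)
        rw [chi_insert_right hiS]
      have e2 : ∀ S ∈ u.powerset,
          ρ^(insert i S).card * b (insert i S) * chi (insert i S) (insert i T)
          = -(ρ * (ρ^S.card * b (insert i S) * chi S T)) := by
        intro S hS
        have hiS : i ∉ S := fun hh => hiu (Finset.mem_powerset.1 hS hh)
        rw [Finset.card_insert_of_notMem hiS, chi_insert_left hiS,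
          if_pos (Finset.mem_insert_self i T), chi_insert_right hiS, pow_succ]
        ring
      rw [e1, Finset.sum_congr rfl e2, Finset.sum_neg_distrib, ← Finset.mul_sum]
      exact (sub_eq_add_neg (A T) (ρ * B T)).symm
    calc ∑ T ∈ (insert i u).powerset, |∑ S ∈ (insert i u).powerset, ρ^S.card * b S * chi S T| ^ q
        = ∑ T ∈ u.powerset, (|A T + ρ * B T|^q + |A T - ρ * B T|^q) := by
          rw [hsplit (fun T => |∑ S ∈ (insert i u).powerset, ρ^S.card * b S * chi S T| ^ q)]
          rw [← Finset.sum_add_distrib]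
          apply Finset.sum_congr rfl
          intro T hT
          rw [hinner1 T hT, hinner2 T hT]
      _ ≤ ∑ T ∈ u.powerset, 2 * ((A T)^2 + (B T)^2)^(q/2) := by
          apply Finset.sum_le_sum
          intro T _
          exact two_point_rho hq2 hq3 hρ (A T) (B T)
      _ ≤ 2^(insert i u).card * (∑ S ∈ (insert i u).powerset, (b S)^2)^(q/2) := by
          rw [← Finset.mul_sum]
          set X := ∑ T ∈ u.powerset, ((A T)^2 + (B T)^2)^(q/2) with hX
          set NA := ∑ S ∈ u.powerset, (b S)^2 with hNA
          set NB := ∑ S ∈ u.powerset, (b (insert i S))^2 with hNB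
          have hXnn : (0:ℝ) ≤ X :=
            Finset.sum_nonneg fun T _ => Real.rpow_nonneg (by positivity) _
          have hNAnn : (0:ℝ) ≤ NA := Finset.sum_nonneg fun S _ => sq_nonneg _
          have hNBnn : (0:ℝ) ≤ NB := Finset.sum_nonneg fun S _ => sq_nonneg _
          have hSA : ∑ T ∈ u.powerset, |A T|^q ≤ 2^u.card * NA^(q/2) := ih b
          have hSB : ∑ T ∈ u.powerset, |B T|^q ≤ 2^u.card * NB^(q/2) :=
            ih (fun S => b (insert i S))
          have hSAnn : (0:ℝ) ≤ ∑ T ∈ u.powerset, |A T|^q :=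
            Finset.sum_nonneg fun T _ => Real.rpow_nonneg (abs_nonneg _) q
          have hSBnn : (0:ℝ) ≤ ∑ T ∈ u.powerset, |B T|^q :=
            Finset.sum_nonneg fun T _ => Real.rpow_nonneg (abs_nonneg _) q
          have hmink := Real.Lp_add_le (s := u.powerset) (f := fun T => (A T)^2)
            (g := fun T => (B T)^2) (by linarith : (1:ℝ) ≤ q/2)
          have e3 : ∀ T ∈ u.powerset,
              |(A T)^2 + (B T)^2| ^ (q/2) = ((A T)^2 + (B T)^2)^(q/2) :=
            fun T _ => by rw [abs_of_nonneg (by positivity)]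
          have e4 : ∀ T ∈ u.powerset, |(A T)^2| ^ (q/2) = |A T|^q :=
            fun T _ => by rw [abs_of_nonneg (sq_nonneg _), sq_rpow]
          have e5 : ∀ T ∈ u.powerset, |(B T)^2| ^ (q/2) = |B T|^q :=
            fun T _ => by rw [abs_of_nonneg (sq_nonneg _), sq_rpow]
          simp only [Finset.sum_congr rfl e3, Finset.sum_congr rfl e4,
            Finset.sum_congr rfl e5] at hmink
          have hcollapse : ∀ Y : ℝ, 0 ≤ Y → (Y^(q/2))^(1/(q/2)) = Y := by
            intro Y hY
            rw [← Real.rpow_mul hY, show (q/2)*(1/(q/2)) = 1 by field_simp, Real.rpow_one]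
          have hcollapse2 : ∀ Y : ℝ, 0 ≤ Y → (Y^(1/(q/2)))^(q/2) = Y := by
            intro Y hY
            rw [← Real.rpow_mul hY, show (1/(q/2))*(q/2) = 1 by field_simp, Real.rpow_one]
          have h6 : (∑ T ∈ u.powerset, |A T|^q)^(1/(q/2)) ≤ ((2:ℝ)^u.card)^(1/(q/2)) * NA := by
            calc (∑ T ∈ u.powerset, |A T|^q)^(1/(q/2))
                ≤ (2^u.card * NA^(q/2))^(1/(q/2)) :=
                  Real.rpow_le_rpow hSAnn hSA hip.le
              _ = ((2:ℝ)^u.card)^(1/(q/2)) * NA := by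
                  rw [Real.mul_rpow (by positivity) (Real.rpow_nonneg hNAnn _),
                    hcollapse NA hNAnn]
          have h7 : (∑ T ∈ u.powerset, |B T|^q)^(1/(q/2)) ≤ ((2:ℝ)^u.card)^(1/(q/2)) * NB := by
            calc (∑ T ∈ u.powerset, |B T|^q)^(1/(q/2))
                ≤ (2^u.card * NB^(q/2))^(1/(q/2)) :=
                  Real.rpow_le_rpow hSBnn hSB hip.le
              _ = ((2:ℝ)^u.card)^(1/(q/2)) * NB := by
                  rw [Real.mul_rpow (by positivity) (Real.rpow_nonneg hNBnn _),
                    hcollapse NB hNBnn]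
          have h8 : X^(1/(q/2)) ≤ ((2:ℝ)^u.card)^(1/(q/2)) * (NA + NB) := by
            calc X^(1/(q/2)) ≤ (∑ T ∈ u.powerset, |A T|^q)^(1/(q/2))
                  + (∑ T ∈ u.powerset, |B T|^q)^(1/(q/2)) := hmink
              _ ≤ ((2:ℝ)^u.card)^(1/(q/2)) * NA + ((2:ℝ)^u.card)^(1/(q/2)) * NB := by
                  linarith
              _ = ((2:ℝ)^u.card)^(1/(q/2)) * (NA + NB) := by ring
          have h9 : X ≤ 2^u.card * (NA + NB)^(q/2) := by
            have hX2 : X = (X^(1/(q/2)))^(q/2) := by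
              rw [← Real.rpow_mul hXnn, show (1/(q/2))*(q/2) = 1 by field_simp, Real.rpow_one]
            rw [hX2]
            calc (X^(1/(q/2)))^(q/2)
                ≤ (((2:ℝ)^u.card)^(1/(q/2)) * (NA + NB))^(q/2) :=
                  Real.rpow_le_rpow (Real.rpow_nonneg hXnn _) h8 hp2.le
              _ = 2^u.card * (NA + NB)^(q/2) := by
                  rw [Real.mul_rpow (Real.rpow_nonneg (by positivity) _) (by linarith),
                    hcollapse2 ((2:ℝ)^u.card) (by positivity)]
          have e10 : ∑ S ∈ (insert i u).powerset, (b S)^2 = NA + NB :=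
            hsplit (fun S => (b S)^2)
          rw [e10, Finset.card_insert_of_notMem hiu, pow_succ]
          calc 2 * X ≤ 2 * (2^u.card * (NA + NB)^(q/2)) := by linarith
            _ = 2^u.card * 2 * (NA+NB)^(q/2) := by ring

lemma hc_deg {q : ℝ} (hq2 : 2 < q) (hq3 : q ≤ 5/2) (a : ℕ) (u : Finset ι)
    (d : Finset ι → ℝ) (hdeg : ∀ S, d S ≠ 0 → S.card ≤ a) :
    ∑ T ∈ u.powerset, |∑ S ∈ u.powerset, d S * chi S T| ^ q
      ≤ 2^u.card * ((q-1)^a * ∑ S ∈ u.powerset, (d S)^2) ^ (q/2) := by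
  have hq1 : (0:ℝ) < q - 1 := by linarith
  set ρ : ℝ := Real.sqrt (1/(q-1)) with hρdef
  have hρpos : 0 < ρ := Real.sqrt_pos.2 (by positivity)
  have hρsq : ρ^2 = 1/(q-1) := Real.sq_sqrt (by positivity)
  have hρ : ρ^2 * (q-1) = 1 := by rw [hρsq]; field_simp
  set b : Finset ι → ℝ := fun S => d S / ρ^S.card with hb
  have hmain := hypercontractivity hq2 hq3 hρ u b
  have e1 : ∀ T ∈ u.powerset, |∑ S ∈ u.powerset, ρ^S.card * b S * chi S T| ^ q
      = |∑ S ∈ u.powerset, d S * chi S T| ^ q := by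
    intro T _
    congr 1
    apply congrArg
    apply Finset.sum_congr rfl
    intro S _
    rw [hb]
    have : ρ^S.card ≠ 0 := pow_ne_zero _ (ne_of_gt hρpos)
    field_simp
  rw [Finset.sum_congr rfl e1] at hmain
  refine le_trans hmain ?_
  apply mul_le_mul_of_nonneg_left _ (by positivity)
  apply Real.rpow_le_rpow (Finset.sum_nonneg fun S _ => sq_nonneg _) _ (by linarith)
  rw [Finset.mul_sum]
  apply Finset.sum_le_sum
  intro S _
  rw [hb]
  have hbS : (d S / ρ^S.card)^2 = (d S)^2 * (q-1)^S.card := by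
    rw [div_pow, ← pow_mul, mul_comm S.card 2, pow_mul, hρsq, one_div_pow]
    rw [div_div_eq_mul_div, div_one]
  rw [hbS]
  by_cases hdS : d S = 0
  · simp [hdS]
  · have hcard := hdeg S hdS
    have : ((q:ℝ)-1)^S.card ≤ (q-1)^a := pow_le_pow_right₀ (by linarith) hcard
    nlinarith [sq_nonneg (d S)]

lemma model_bound (a : ℕ) {ε : ℝ} (hε0 : 0 < ε) (hε1 : ε ≤ 1/2) (u : Finset ι)
    (d : Finset ι → ℝ) (hdeg : ∀ S, d S ≠ 0 → S.card ≤ a) (hd0 : d ∅ = 0)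
    (hpos : ∃ T ∈ u.powerset, 0 < ∑ S ∈ u.powerset, d S * chi S T) :
    (2:ℝ)^u.card ≤ 4 * Real.exp (a*(2+ε)) *
      ((u.powerset.filter (fun T => 0 < ∑ S ∈ u.powerset, d S * chi S T)).card : ℝ) := by
  set q : ℝ := 2 + ε with hqdef
  have hq2 : 2 < q := by simp [hqdef]; linarith
  have hq3 : q ≤ 5/2 := by simp [hqdef]; linarith
  have hq20 : 0 < q - 2 := by simp [hqdef]; linarith
  have hq10 : (1:ℝ) < q - 1 := by simp [hqdef]; linarith
  set g : Finset ι → ℝ := fun T => ∑ S ∈ u.powerset, d S * chi S T with hg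
  set F : Finset (Finset ι) := u.powerset.filter (fun T => 0 < g T) with hF
  set m : ℝ := ∑ T ∈ F, g T with hm
  set M1 : ℝ := ∑ T ∈ u.powerset, |g T| with hM1def
  set M2 : ℝ := ∑ T ∈ u.powerset, (g T)^2 with hM2def
  set Mq : ℝ := ∑ T ∈ u.powerset, |g T|^q with hMqdef
  set N2 : ℝ := ∑ S ∈ u.powerset, (d S)^2 with hN2def
  set W : ℝ := (2:ℝ)^u.card with hW
  set K : ℝ := (q-1)^a with hK
  set k : ℝ := (F.card : ℝ) with hk
  have hWpos : 0 < W := by positivity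
  have hKpos : 0 < K := by positivity
  -- mean zero
  have hsum0 : ∑ T ∈ u.powerset, g T = 0 := by
    rw [hg]
    rw [Finset.sum_comm]
    apply Finset.sum_eq_zero
    intro S hS
    rw [← Finset.mul_sum, sum_chi u S (Finset.mem_powerset.1 hS)]
    by_cases h : S = ∅
    · rw [if_pos h, h, hd0, zero_mul]
    · rw [if_neg h, mul_zero]
  -- m positive
  have hmpos : 0 < m := by
    obtain ⟨T0, hT0, hgT0⟩ := hpos
    have hT0F : T0 ∈ F := Finset.mem_filter.2 ⟨hT0, hgT0⟩
    rw [hm]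
    have := Finset.single_le_sum (f := g) (fun T hT => le_of_lt (Finset.mem_filter.1 hT).2) hT0F
    linarith
  -- k positive
  have hkpos : 0 < k := by
    obtain ⟨T0, hT0, hgT0⟩ := hpos
    have hT0F : T0 ∈ F := Finset.mem_filter.2 ⟨hT0, hgT0⟩
    rw [hk]
    exact_mod_cast Finset.card_pos.2 ⟨T0, hT0F⟩
  -- M1 = 2m
  have hM1 : M1 = 2 * m := by
    have hs1 := Finset.sum_filter_add_sum_filter_not u.powerset (fun T => 0 < g T) g
    have hs2 := Finset.sum_filter_add_sum_filter_not u.powerset (fun T => 0 < g T) (fun T => |g T|)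
    have e1 : ∑ T ∈ u.powerset.filter (fun T => 0 < g T), |g T| = m := by
      apply Finset.sum_congr rfl
      intro T hT
      exact abs_of_pos (Finset.mem_filter.1 hT).2
    have e2 : ∑ T ∈ u.powerset.filter (fun T => ¬ 0 < g T), |g T|
        = - ∑ T ∈ u.powerset.filter (fun T => ¬ 0 < g T), g T := by
      rw [← Finset.sum_neg_distrib]
      apply Finset.sum_congr rfl
      intro T hT
      exact abs_of_nonpos (le_of_not_gt (Finset.mem_filter.1 hT).2)
    rw [hsum0] at hs1
    rw [hM1def, ← hs2, e1, e2]
    have : ∑ T ∈ u.powerset.filter (fun T => ¬ 0 < g T), g T = -m := by linarith [hs1]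
    rw [this]
    ring
  -- nonnegativity of the norms
  have hM1nn : 0 ≤ M1 := Finset.sum_nonneg fun T _ => abs_nonneg _
  have hM2nn : 0 ≤ M2 := Finset.sum_nonneg fun T _ => sq_nonneg _
  have hMqnn : 0 ≤ Mq := Finset.sum_nonneg fun T _ => Real.rpow_nonneg (abs_nonneg _) _
  have hN2nn : 0 ≤ N2 := Finset.sum_nonneg fun S _ => sq_nonneg _
  -- Cauchy-Schwarz
  have hCS : m^2 ≤ M2 * k := by
    have h1 : (∑ T ∈ F, g T * 1)^2 ≤ (∑ T ∈ F, (g T)^2) * (∑ T ∈ F, (1:ℝ)^2) :=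
      Finset.sum_mul_sq_le_sq_mul_sq F g 1
    simp only [mul_one, one_pow] at h1
    have h2 : ∑ T ∈ F, (1:ℝ) = k := by rw [hk, Finset.sum_const, nsmul_eq_mul, mul_one]
    rw [h2] at h1
    have h3 : (∑ T ∈ F, (g T)^2) ≤ M2 := by
      apply Finset.sum_le_sum_of_subset_of_nonneg (Finset.filter_subset _ _)
      intro T _ _
      exact sq_nonneg _
    calc m^2 ≤ (∑ T ∈ F, (g T)^2) * k := h1
      _ ≤ M2 * k := mul_le_mul_of_nonneg_right h3 (le_of_lt hkpos)
  -- Parseval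
  have hpars : M2 = W * N2 := parseval u d
  -- positivity of M2, N2
  have hM2pos : 0 < M2 := by nlinarith
  have hN2pos : 0 < N2 := by
    by_contra h
    push_neg at h
    have : N2 = 0 := le_antisymm h hN2nn
    rw [this, mul_zero] at hpars
    linarith
  -- Hölder
  have hq1ne : (q-1) ≠ 0 := by linarith
  have hq2ne : (q-2) ≠ 0 := by linarith
  have hconj : Real.HolderConjugate ((q-1)/(q-2)) (q-1) := by
    rw [Real.holderConjugate_iff]
    constructor
    · rw [lt_div_iff₀ hq20]; linarith
    · rw [inv_div]
      field_simp <;> ring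
  have hhold : M2 ≤ M1 ^ ((q-2)/(q-1)) * Mq ^ (1/(q-1)) := by
    have h := Real.inner_le_Lp_mul_Lq (s := u.powerset)
      (fun T => |g T| ^ ((q-2)/(q-1))) (fun T => |g T| ^ (q/(q-1))) hconj
    have e1 : ∀ T ∈ u.powerset, |g T| ^ ((q-2)/(q-1)) * |g T| ^ (q/(q-1)) = (g T)^2 := by
      intro T _
      by_cases hgT : g T = 0
      · rw [hgT]
        rw [abs_zero, Real.zero_rpow (by positivity), Real.zero_rpow (by positivity)]
        norm_num
      · have habs : 0 < |g T| := abs_pos.2 hgT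
        rw [← Real.rpow_add habs, show (q-2)/(q-1) + q/(q-1) = 2 by field_simp <;> ring]
        rw [show ((2:ℝ) : ℝ) = ((2:ℕ) : ℝ) by norm_num, Real.rpow_natCast, sq_abs]
    have e2 : ∀ T ∈ u.powerset, (|(|g T| ^ ((q-2)/(q-1)))| : ℝ) ^ ((q-1)/(q-2)) = |g T| := by
      intro T _
      rw [abs_of_nonneg (Real.rpow_nonneg (abs_nonneg _) _), ← Real.rpow_mul (abs_nonneg _),
        show ((q-2)/(q-1)) * ((q-1)/(q-2)) = 1 by field_simp, Real.rpow_one]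
    have e3 : ∀ T ∈ u.powerset, (|(|g T| ^ (q/(q-1)))| : ℝ) ^ (q-1) = |g T| ^ q := by
      intro T _
      rw [abs_of_nonneg (Real.rpow_nonneg (abs_nonneg _) _), ← Real.rpow_mul (abs_nonneg _),
        show (q/(q-1)) * (q-1) = q by field_simp]
    rw [Finset.sum_congr rfl e1, Finset.sum_congr rfl e2, Finset.sum_congr rfl e3] at h
    rw [show 1/((q-1)/(q-2)) = (q-2)/(q-1) by rw [one_div_div]] at h
    exact h
  -- hypercontractivity with degree bound
  have hhc : Mq ≤ W * (K * N2) ^ (q/2) := hc_deg hq2 hq3 a u d hdeg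
  -- raise Hölder to the power (q-1)
  have h1 : M2 ^ (q-1) ≤ (2*m) ^ (q-2) * Mq := by
    have h := Real.rpow_le_rpow hM2nn hhold (by linarith : (0:ℝ) ≤ q-1)
    rw [Real.mul_rpow (Real.rpow_nonneg hM1nn _) (Real.rpow_nonneg hMqnn _),
      ← Real.rpow_mul hM1nn, ← Real.rpow_mul hMqnn,
      show ((q-2)/(q-1)) * (q-1) = q-2 by field_simp,
      show (1/(q-1)) * (q-1) = 1 by field_simp, Real.rpow_one, hM1] at h
    exact h
  have h3 : M2 ^ (q-1) ≤ (2*m) ^ (q-2) * (W * (K * N2) ^ (q/2)) := by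
    refine le_trans h1 ?_
    exact mul_le_mul_of_nonneg_left hhc (Real.rpow_nonneg (by linarith) _)
  -- rewrite both sides and cancel
  have h4 : W ^ (q-2) * N2 ^ ((q-2)/2) ≤ (2*m) ^ (q-2) * K ^ (q/2) := by
    have hexp1 : M2 ^ (q-1) = (W ^ (q-2) * N2 ^ ((q-2)/2)) * (W * N2 ^ (q/2)) := by
      rw [hpars, Real.mul_rpow (le_of_lt hWpos) (le_of_lt hN2pos)]
      rw [show q - 1 = (q-2) + 1 by ring, Real.rpow_add hWpos, Real.rpow_one]
      rw [show (q-2) + 1 = (q-2)/2 + q/2 by ring, Real.rpow_add hN2pos]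
      ring
    have hexp2 : (2*m) ^ (q-2) * (W * (K * N2) ^ (q/2))
        = ((2*m) ^ (q-2) * K ^ (q/2)) * (W * N2 ^ (q/2)) := by
      rw [Real.mul_rpow (le_of_lt hKpos) (le_of_lt hN2pos)]
      ring
    rw [hexp1, hexp2] at h3
    exact le_of_mul_le_mul_right h3 (by positivity)
  -- raise to the power 2/(q-2)
  have h5 : W ^ 2 * N2 ≤ (2*m)^2 * K ^ (q/(q-2)) := by
    have h := Real.rpow_le_rpow (by positivity) h4 (by positivity : (0:ℝ) ≤ 2/(q-2))
    rw [Real.mul_rpow (Real.rpow_nonneg (le_of_lt hWpos) _) (Real.rpow_nonneg (le_of_lt hN2pos) _),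
      Real.mul_rpow (Real.rpow_nonneg (by linarith) _) (Real.rpow_nonneg (le_of_lt hKpos) _),
      ← Real.rpow_mul (le_of_lt hWpos), ← Real.rpow_mul (le_of_lt hN2pos),
      ← Real.rpow_mul (by linarith : (0:ℝ) ≤ 2*m), ← Real.rpow_mul (le_of_lt hKpos),
      show (q-2) * (2/(q-2)) = 2 by field_simp,
      show ((q-2)/2) * (2/(q-2)) = 1 by field_simp,
      show (q/2) * (2/(q-2)) = q/(q-2) by field_simp <;> ring, Real.rpow_one] at h
    rw [show ((2:ℝ):ℝ) = ((2:ℕ):ℝ) by norm_num, Real.rpow_natCast, Real.rpow_natCast] at h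
    exact h
  -- combine with Cauchy-Schwarz
  have h6 : m^2 * W ≤ m^2 * (4 * K ^ (q/(q-2)) * k) := by
    have c1 : m^2 * W ≤ (W * N2 * k) * W := by
      rw [← hpars]
      exact mul_le_mul_of_nonneg_right (by rw [hpars] at hCS ⊢; linarith) (le_of_lt hWpos)
    have c2 : (W * N2 * k) * W = (W^2 * N2) * k := by ring
    have c3 : (W^2 * N2) * k ≤ ((2*m)^2 * K ^ (q/(q-2))) * k :=
      mul_le_mul_of_nonneg_right h5 (le_of_lt hkpos)
    calc m^2 * W ≤ (W^2 * N2) * k := by rw [← c2]; exact c1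
      _ ≤ ((2*m)^2 * K ^ (q/(q-2))) * k := c3
      _ = m^2 * (4 * K ^ (q/(q-2)) * k) := by ring
  have h7 : W ≤ 4 * K ^ (q/(q-2)) * k :=
    le_of_mul_le_mul_left h6 (by positivity)
  -- bound K ^ (q/(q-2)) by exp(a*(2+ε))
  have h8 : K ^ (q/(q-2)) ≤ Real.exp (a*(2+ε)) := by
    rw [Real.rpow_def_of_pos hKpos, hK, Real.log_pow]
    rw [Real.exp_le_exp]
    have hlog : Real.log (q-1) ≤ ε := by
      have := Real.log_le_sub_one_of_pos (show (0:ℝ) < q - 1 by linarith)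
      have : Real.log (q-1) ≤ q - 1 - 1 := this
      simp only [hqdef] at this ⊢
      linarith
    have hlognn : 0 ≤ Real.log (q-1) := Real.log_nonneg (by linarith)
    have hfrac : q/(q-2) = (2+ε)/ε := by rw [hqdef]; congr 1; ring
    rw [hfrac]
    calc (a:ℝ) * Real.log (q-1) * ((2+ε)/ε) ≤ (a:ℝ) * ε * ((2+ε)/ε) := by
          apply mul_le_mul_of_nonneg_right _ (by positivity)
          exact mul_le_mul_of_nonneg_left hlog (Nat.cast_nonneg a)
      _ = (a:ℝ) * (2+ε) := by field_simp <;> ring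
  calc W ≤ 4 * K ^ (q/(q-2)) * k := h7
    _ ≤ 4 * Real.exp (a*(2+ε)) * k := by
        apply mul_le_mul_of_nonneg_right _ (le_of_lt hkpos)
        apply mul_le_mul_of_nonneg_left h8 (by norm_num)

end BCA

/-- **Anticoncentration for low-degree functions on the Boolean cube**
(Theorem 9.24 of O'Donnell, *Analysis of Boolean Functions*).
Let `f : {−1,1}ⁿ → ℝ` be a nonconstant function whose multilinear (Fourier) expansion
`f(x) = Σ_S c_S ∏_{i∈S} x_i` has degree at most `a`.  Then, under the uniform distribution
on `{−1,1}ⁿ`, `Pr[f(x) > E[f]] ≥ 1/(4 e^{2a})`. -/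
theorem boolean_cube_anticoncentration
    (n a : ℕ) (c : Finset (Fin n) → ℝ)
    (hdeg : ∀ S : Finset (Fin n), c S ≠ 0 → S.card ≤ a)
    (f : (Fin n → ℝ) → ℝ)
    (hf : ∀ x, f x = ∑ S : Finset (Fin n), c S * ∏ i ∈ S, x i)
    (cube : Finset (Fin n → ℝ))
    (hcube : cube = Fintype.piFinset fun _ : Fin n => ({-1, 1} : Finset ℝ))
    (hnonconst : ∃ x ∈ cube, ∃ y ∈ cube, f x ≠ f y) :
    1 / (4 * Real.exp (2 * a))
      ≤ ((cube.filter fun x => (∑ y ∈ cube, f y) / 2 ^ n < f x).card : ℝ) / 2 ^ n := by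
  classical
  set u : Finset (Fin n) := Finset.univ with hu
  have hucard : u.card = n := by rw [hu, Finset.card_univ, Fintype.card_fin]
  set e : Finset (Fin n) → (Fin n → ℝ) := fun T i => if i ∈ T then -1 else 1 with he
  set jm : (Fin n → ℝ) → Finset (Fin n) := fun x => Finset.univ.filter (fun i => x i = -1)
    with hjm
  have hmem : ∀ x ∈ cube, ∀ i, x i = -1 ∨ x i = 1 := by
    intro x hx i
    rw [hcube] at hx
    have := Fintype.mem_piFinset.1 hx i
    rcases Finset.mem_insert.1 this with h | h
    · left; exact h
    · right; exact Finset.mem_singleton.1 h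
  have hi : ∀ T ∈ u.powerset, e T ∈ cube := by
    intro T _
    rw [hcube]
    apply Fintype.mem_piFinset.2
    intro i
    by_cases h : i ∈ T <;> simp [he, h]
  have hjmem : ∀ x ∈ cube, jm x ∈ u.powerset :=
    fun x _ => Finset.mem_powerset.2 (Finset.subset_univ _)
  have hleft : ∀ T ∈ u.powerset, jm (e T) = T := by
    intro T _
    ext i
    simp only [hjm, he, Finset.mem_filter, Finset.mem_univ, true_and]
    by_cases h : i ∈ T <;> simp [h] <;> norm_num
  have hright : ∀ x ∈ cube, e (jm x) = x := by
    intro x hx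
    funext i
    simp only [he, hjm, Finset.mem_filter, Finset.mem_univ, true_and]
    rcases hmem x hx i with h | h
    · rw [if_pos h, h]
    · rw [if_neg (by rw [h]; norm_num), h]
  have hsum : ∀ h : (Fin n → ℝ) → ℝ, ∑ x ∈ cube, h x = ∑ T ∈ u.powerset, h (e T) :=
    fun h => Finset.sum_nbij' jm e hjmem hi hright hleft
      (fun x hx => by rw [hright x hx])
  set d : Finset (Fin n) → ℝ := fun S => if S = ∅ then 0 else c S with hd
  have hdeg' : ∀ S, d S ≠ 0 → S.card ≤ a := by
    intro S hS
    rw [hd] at hS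
    by_cases h : S = ∅
    · simp [h] at hS
    · exact hdeg S (by simpa [h] using hS)
  set g : Finset (Fin n) → ℝ := fun T => ∑ S ∈ u.powerset, d S * BCA.chi S T with hg
  have hfe : ∀ T, f (e T) = ∑ S ∈ u.powerset, c S * BCA.chi S T := by
    intro T
    rw [hf (e T), hu, Finset.powerset_univ]
    apply Finset.sum_congr rfl
    intro S _
    rfl
  have hemp : ∅ ∈ u.powerset := Finset.empty_mem_powerset u
  have hgT : ∀ T, g T = f (e T) - c ∅ := by
    intro T
    show ∑ S ∈ u.powerset, d S * BCA.chi S T = f (e T) - c ∅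
    rw [hfe T, ← Finset.add_sum_erase _ (fun S => d S * BCA.chi S T) hemp,
      ← Finset.add_sum_erase _ (fun S => c S * BCA.chi S T) hemp]
    have hdemp : d ∅ = 0 := by rw [hd]; simp
    have hchiemp : BCA.chi (∅ : Finset (Fin n)) T = 1 := BCA.chi_empty T
    have herase : ∑ S ∈ (u.powerset).erase ∅, d S * BCA.chi S T
        = ∑ S ∈ (u.powerset).erase ∅, c S * BCA.chi S T := by
      apply Finset.sum_congr rfl
      intro S hS
      simp only [hd]
      rw [if_neg (Finset.ne_of_mem_erase hS)]
    rw [hdemp, hchiemp, herase]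
    ring
  have hEsum : ∑ y ∈ cube, f y = c ∅ * 2^n := by
    rw [hsum f, Finset.sum_congr rfl (fun T _ => hfe T), Finset.sum_comm]
    have : ∀ S ∈ u.powerset, ∑ T ∈ u.powerset, c S * BCA.chi S T
        = if S = ∅ then c ∅ * 2^n else 0 := by
      intro S hS
      rw [← Finset.mul_sum, BCA.sum_chi u S (Finset.mem_powerset.1 hS)]
      by_cases h : S = ∅
      · rw [if_pos h, if_pos h, h, hucard]
      · rw [if_neg h, if_neg h, mul_zero]
    rw [Finset.sum_congr rfl this, Finset.sum_ite_eq' u.powerset ∅ (fun _ => c ∅ * 2^n),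
      if_pos hemp]
  have h2npos : (0:ℝ) < 2^n := by positivity
  have hμ : (∑ y ∈ cube, f y)/2^n = c ∅ := by
    rw [hEsum]
    field_simp
  have hgx : ∀ x ∈ cube, g (jm x) = f x - c ∅ := by
    intro x hx
    rw [hgT, hright x hx]
  have hcard : (cube.filter fun x => (∑ y ∈ cube, f y) / 2 ^ n < f x).card
      = ((u.powerset.filter fun T => 0 < g T).card) := by
    apply Finset.card_nbij' jm e
    · intro x hx
      have hx' := Finset.mem_filter.1 hx
      apply Finset.mem_filter.2
      refine ⟨hjmem x hx'.1, ?_⟩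
      rw [hgx x hx'.1]
      have := hx'.2
      rw [hμ] at this
      linarith
    · intro T hT
      have hT' := Finset.mem_filter.1 hT
      apply Finset.mem_filter.2
      refine ⟨hi T hT'.1, ?_⟩
      rw [hμ]
      have := hT'.2
      rw [hgT] at this
      linarith
    · intro x hx
      exact hright x (Finset.mem_filter.1 hx).1
    · intro T hT
      exact hleft T (Finset.mem_filter.1 hT).1
  have hpos : ∃ T ∈ u.powerset, 0 < g T := by
    by_contra hcon
    push_neg at hcon
    have hsumg : ∑ T ∈ u.powerset, g T = 0 := by
      rw [Finset.sum_congr rfl (fun T _ => hgT T)]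
      rw [Finset.sum_sub_distrib, ← hsum f, hEsum, Finset.sum_const,
        Finset.card_powerset, hucard, nsmul_eq_mul]
      push_cast
      ring
    have hall : ∀ T ∈ u.powerset, g T = 0 :=
      fun T hT => (Finset.sum_eq_zero_iff_of_nonpos hcon).1 hsumg T hT
    obtain ⟨x, hx, y, hy, hxy⟩ := hnonconst
    have hfx : f x = c ∅ := by
      have := hall (jm x) (hjmem x hx)
      rw [hgx x hx] at this
      linarith
    have hfy : f y = c ∅ := by
      have := hall (jm y) (hjmem y hy)
      rw [hgx y hy] at this
      linarith
    exact hxy (by rw [hfx, hfy])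
  have hbound : ∀ ε : ℝ, 0 < ε → ε ≤ 1/2 →
      1/(4*Real.exp (a*(2+ε)))
        ≤ ((cube.filter fun x => (∑ y ∈ cube, f y) / 2 ^ n < f x).card : ℝ) / 2 ^ n := by
    intro ε h1 h2
    have hmodel := BCA.model_bound a h1 h2 u d hdeg' (by rw [hd]; simp) hpos
    rw [hucard] at hmodel
    rw [hcard]
    rw [div_le_div_iff₀ (by positivity) h2npos]
    have hexp : (0:ℝ) < Real.exp (a*(2+ε)) := Real.exp_pos _
    push_cast
    nlinarith [hmodel]
  have hlim : Filter.Tendsto (fun ε : ℝ => 1/(4*Real.exp (a*(2+ε))))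
      (nhdsWithin 0 (Set.Ioi 0)) (nhds (1/(4*Real.exp (2*a)))) := by
    apply Filter.Tendsto.mono_left _ nhdsWithin_le_nhds
    have hcont : Continuous fun ε : ℝ => 1/(4*Real.exp (a*(2+ε))) := by
      apply Continuous.div continuous_const
      · exact continuous_const.mul (Real.continuous_exp.comp
          (continuous_const.mul (continuous_const.add continuous_id)))
      · intro x
        positivity
    have := hcont.tendsto 0
    convert this using 2
    norm_num
    ring
  exact le_of_tendsto hlim (Filter.eventually_of_mem
    (Ioc_mem_nhdsGT (by norm_num : (0:ℝ) < 1/2))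
    (fun ε hε => hbound ε hε.1 hε.2))
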